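/- Let P = A ∪ B be a finite bipartite poset and set m = min(|A|, |B|). If m ≥ 2, then either Idim(P) < m or P contains the standard example S_m as a subposet. -/

import Mathlib

/-- `x` and `y` are incomparable elements of a poset. -/
def Incomp {α : Type*} [PartialOrder α] (x y : α) : Prop := ¬ x ≤ y ∧ ¬ y ≤ x

/-- `r` is a linear extension of the partial order on `α`. -/
def IsLinearExtension {α : Type*} [PartialOrder α] (r : α → α → Prop) : Prop :=
  IsLinearOrder α r ∧ ∀ x y : α, x ≤ y → r x y

/-- `α` admits a realizer consisting of `d` linear extensions. -/
def RealizerOfSize (α : Type*) [PartialOrder α] (d : ℕ) : Prop :=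
  ∃ L : Fin d → (α → α → Prop), (∀ i, IsLinearExtension (L i)) ∧
    ∀ x y : α, x ≤ y ↔ ∀ i, L i x y

/-- The Dushnik–Miller dimension: the least positive integer `d`
for which the order is the intersection of `d` linear extensions. -/
noncomputable def dimP (α : Type*) [PartialOrder α] : ℕ :=
  sInf {d | 0 < d ∧ RealizerOfSize α d}

/-- The "interval dimension" of a bipartite poset `P = A ∪ B`: the least `d` such that
some `d` linear extensions reverse every incomparable pair `(a,b) ∈ A × B`. -/
noncomputable def Idim (α : Type*) [PartialOrder α] (A B : Set α) : ℕ :=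
  sInf {d | ∃ L : Fin d → (α → α → Prop), (∀ i, IsLinearExtension (L i)) ∧
    ∀ a ∈ A, ∀ b ∈ B, Incomp a b → ∃ i, L i b a}

/-- Key lemma: if a set `Q` of pairs admits no "chain" `p.1 ≤ q.2`, `q.1 ≤ r.2`
(including degenerate ones), then there is a linear extension reversing all
pairs of `Q`. -/
lemma exists_reversing_ext {α : Type*} [PartialOrder α] (Q : Set (α × α))
    (H : ∀ p ∈ Q, ∀ q ∈ Q, ∀ r ∈ Q, p.1 ≤ q.2 → q.1 ≤ r.2 → False) :
    ∃ L : α → α → Prop, IsLinearExtension L ∧ ∀ p ∈ Q, L p.2 p.1 := by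
  set r : α → α → Prop := fun x y => x ≤ y ∨ (∃ p ∈ Q, x ≤ p.2 ∧ p.1 ≤ y) ∨
    (∃ p ∈ Q, ∃ q ∈ Q, x ≤ p.2 ∧ p.1 ≤ q.2 ∧ q.1 ≤ y) with hrdef
  haveI hpo : IsPartialOrder α r := by
    refine { refl := fun x => Or.inl le_rfl, trans := ?_, antisymm := ?_ }
    · rintro x y z (hxy | ⟨p, hp, hxp, hpy⟩ | ⟨p, hp, q, hq, hxp, hpq, hqy⟩)
        <;> rintro (hyz | ⟨p', hp', hyp', hpz'⟩ | ⟨p', hp', q', hq', hyp', hpq', hqz'⟩)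
      · exact Or.inl (hxy.trans hyz)
      · exact Or.inr (Or.inl ⟨p', hp', hxy.trans hyp', hpz'⟩)
      · exact Or.inr (Or.inr ⟨p', hp', q', hq', hxy.trans hyp', hpq', hqz'⟩)
      · exact Or.inr (Or.inl ⟨p, hp, hxp, hpy.trans hyz⟩)
      · exact Or.inr (Or.inr ⟨p, hp, p', hp', hxp, hpy.trans hyp', hpz'⟩)
      · exact (H p hp p' hp' q' hq' (hpy.trans hyp') hpq').elim
      · exact Or.inr (Or.inr ⟨p, hp, q, hq, hxp, hpq, hqy.trans hyz⟩)
      · exact (H p hp q hq p' hp' hpq (hqy.trans hyp')).elim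
      · exact (H p hp q hq p' hp' hpq (hqy.trans hyp')).elim
    · rintro x y (hxy | ⟨p, hp, hxp, hpy⟩ | ⟨p, hp, q, hq, hxp, hpq, hqy⟩)
        <;> rintro (hyx | ⟨p', hp', hyp', hpx'⟩ | ⟨p', hp', q', hq', hyp', hpq', hqx'⟩)
      · exact le_antisymm hxy hyx
      · exact (H p' hp' p' hp' p' hp' (hpx'.trans (hxy.trans hyp')) (hpx'.trans (hxy.trans hyp'))).elim
      · exact (H p' hp' q' hq' p' hp' hpq' (hqx'.trans (hxy.trans hyp'))).elim
      · exact (H p hp p hp p hp (hpy.trans (hyx.trans hxp)) (hpy.trans (hyx.trans hxp))).elim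
      · exact (H p hp p' hp' p hp (hpy.trans hyp') (hpx'.trans hxp)).elim
      · exact (H p hp p' hp' q' hq' (hpy.trans hyp') hpq').elim
      · exact (H p hp q hq p hp hpq (hqy.trans (hyx.trans hxp))).elim
      · exact (H p hp q hq p' hp' hpq (hqy.trans hyp')).elim
      · exact (H p hp q hq p' hp' hpq (hqy.trans hyp')).elim
  obtain ⟨s, hs, hsub⟩ := extend_partialOrder r
  refine ⟨s, ⟨hs, fun x y h => hsub x y (Or.inl h)⟩, fun p hp =>
    hsub p.2 p.1 (Or.inr (Or.inl ⟨p, hp, le_rfl, le_rfl⟩))⟩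

/-- If all first (or all second) coordinates of `Q` lie in a two-element set and `Q`
has no 2-cycle, then `Q` has no chain. -/
lemma no_chain_of_two {α : Type*} [PartialOrder α] (Q : Set (α × α))
    (hInc : ∀ p ∈ Q, Incomp p.1 p.2)
    (h2 : ∀ p ∈ Q, ∀ q ∈ Q, p.1 ≤ q.2 → q.1 ≤ p.2 → False)
    (hown : (∃ u v : α, ∀ p ∈ Q, p.1 = u ∨ p.1 = v) ∨
            (∃ u v : α, ∀ p ∈ Q, p.2 = u ∨ p.2 = v)) :
    ∀ p ∈ Q, ∀ q ∈ Q, ∀ r ∈ Q, p.1 ≤ q.2 → q.1 ≤ r.2 → False := by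
  intro p hp q hq s hs h1 h2'
  have hpq : p.1 ≠ q.1 := by
    intro h; exact (hInc q hq).1 (h ▸ h1)
  have hqs : q.1 ≠ s.1 := by
    intro h; exact (hInc s hs).1 (h ▸ h2')
  rcases hown with ⟨u, v, ho⟩ | ⟨u, v, ho⟩
  · have hps : p.1 = s.1 := by
      rcases ho p hp with h | h <;> rcases ho q hq with h' | h' <;>
        rcases ho s hs with h'' | h'' <;> simp_all
    exact h2 q hq s hs h2' (hps ▸ h1)
  · have hpq2 : p.2 ≠ q.2 := by
      intro h; exact (hInc p hp).1 (h ▸ h1)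
    have hqs2 : q.2 ≠ s.2 := by
      intro h; exact (hInc q hq).1 (h ▸ h2')
    have hps : p.2 = s.2 := by
      rcases ho p hp with h | h <;> rcases ho q hq with h' | h' <;>
        rcases ho s hs with h'' | h'' <;> simp_all
    exact h2 p hp q hq h1 (hps ▸ h2')

/-- One-sided main lemma: if `|A| = m ≥ 2` then either all incomparable pairs of
`A × B` can be reversed with `m - 1` linear extensions, or `S_m` is present. -/
lemma side_lemma {α : Type*} [PartialOrder α] (A B : Set α)
    (hdisj : Disjoint A B) (m : ℕ) (hmA : A.ncard = m) (hAfin : A.Finite) (hm2 : 2 ≤ m) :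
    (∃ L : Fin (m - 1) → (α → α → Prop), (∀ i, IsLinearExtension (L i)) ∧
      ∀ a ∈ A, ∀ b ∈ B, Incomp a b → ∃ i, L i b a) ∨
    (∃ a b : Fin m → α, Function.Injective a ∧ Function.Injective b ∧
      (∀ i, a i ∈ A) ∧ (∀ i, b i ∈ B) ∧
      (∀ i j : Fin m, a i < b j ↔ i ≠ j) ∧
      (∀ i : Fin m, Incomp (a i) (b i))) := by
  classical
  have hne : ∀ x ∈ A, ∀ y ∈ B, x ≠ y := by
    intro x hx y hy h
    exact (Set.disjoint_left.mp hdisj hx) (h ▸ hy)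
  by_cases hall : ∀ a ∈ A, ∃ y, y ∈ B ∧ Incomp a y ∧ ∀ a' ∈ A, a' ≠ a → a' < y
  · -- standard example S_m
    right
    have hcard : hAfin.toFinset.card = m := by
      rw [← Set.ncard_eq_toFinset_card A hAfin]; exact hmA
    let e : Fin m ≃ hAfin.toFinset := (hAfin.toFinset.equivFinOfCardEq hcard).symm
    set a : Fin m → α := fun i => (e i : α) with ha
    have haA : ∀ i, a i ∈ A := fun i => hAfin.mem_toFinset.mp (e i).2
    have hainj : Function.Injective a := fun i j h =>
      e.injective (Subtype.coe_injective h)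
    have hb : ∀ i, ∃ y, y ∈ B ∧ Incomp (a i) y ∧ ∀ a' ∈ A, a' ≠ a i → a' < y :=
      fun i => hall (a i) (haA i)
    choose b hbB hbI hbL using hb
    refine ⟨a, b, hainj, ?_, haA, hbB, ?_, hbI⟩
    · intro i j h
      by_contra hij
      have h1 : a i < b j := hbL j (a i) (haA i) (fun hh => hij (hainj hh))
      rw [← h] at h1
      exact (hbI i).1 h1.le
    · intro i j
      constructor
      · intro hlt hij
        subst hij
        exact (hbI i).1 hlt.le
      · intro hij
        exact hbL j (a i) (haA i) (fun hh => hij (hainj hh))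
  · -- m - 1 extensions suffice
    left
    push_neg at hall
    obtain ⟨astar, hastar, hhome⟩ := hall
    have hex : ∀ bb, bb ∈ B → Incomp astar bb →
        ∃ a', a' ∈ A ∧ a' ≠ astar ∧ ¬ a' < bb := by
      intro bb h1 h2
      obtain ⟨a', h3, h4, h5⟩ := hhome bb h1 h2
      exact ⟨a', h3, h4, h5⟩
    set home : α → α := fun bb =>
      if h : ∃ a', a' ∈ A ∧ a' ≠ astar ∧ ¬ a' < bb then h.choose else astar with hhdef
    have hspec : ∀ bb, bb ∈ B → Incomp astar bb →
        home bb ∈ A ∧ home bb ≠ astar ∧ ¬ home bb < bb := by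
      intro bb h1 h2
      have h := hex bb h1 h2
      simp only [hhdef, dif_pos h]
      exact h.choose_spec
    have hA'fin : (A \ {astar}).Finite := hAfin.subset Set.diff_subset
    have hA'card : hA'fin.toFinset.card = m - 1 := by
      rw [← Set.ncard_eq_toFinset_card _ hA'fin,
        Set.ncard_diff_singleton_of_mem hastar, hmA]
    let e : Fin (m - 1) ≃ hA'fin.toFinset := (hA'fin.toFinset.equivFinOfCardEq hA'card).symm
    set Q : Fin (m - 1) → Set (α × α) := fun i =>
      {p | p.2 ∈ B ∧ ((p.1 = (e i : α) ∧ Incomp (e i : α) p.2) ∨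
        (p.1 = astar ∧ Incomp astar p.2 ∧ home p.2 = (e i : α)))} with hQdef
    have heA : ∀ i : Fin (m - 1), (e i : α) ∈ A ∧ (e i : α) ≠ astar := by
      intro i
      have := hA'fin.mem_toFinset.mp (e i).2
      exact ⟨this.1, fun h => this.2 (by simp [h])⟩
    have hInc : ∀ i, ∀ p ∈ Q i, Incomp p.1 p.2 := by
      rintro i p ⟨hpB, ⟨h1, h2⟩ | ⟨h1, h2, h3⟩⟩
      · rwa [h1]
      · rwa [h1]
    have key : ∀ i : Fin (m - 1), ∃ L : α → α → Prop, IsLinearExtension L ∧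
        ∀ p ∈ Q i, L p.2 p.1 := by
      intro i
      apply exists_reversing_ext
      apply no_chain_of_two _ (hInc i)
      · rintro p ⟨hpB, hp⟩ q ⟨hqB, hq⟩ h1 h2
        rcases hp with ⟨hp1, hp2⟩ | ⟨hp1, hp2, hp3⟩ <;>
          rcases hq with ⟨hq1, hq2⟩ | ⟨hq1, hq2, hq3⟩
        · rw [hp1] at h1
          exact hq2.1 h1
        · -- p owned by e i, q owned by astar, home q.2 = e i
          rw [hp1] at h1
          have hlt : (e i : α) < q.2 :=
            lt_of_le_of_ne h1 (hne _ (heA i).1 _ hqB)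
          rw [← hq3] at hlt
          exact (hspec q.2 hqB hq2).2.2 hlt
        · -- p owned by astar with home p.2 = e i, q owned by e i
          rw [hq1] at h2
          have hlt : (e i : α) < p.2 :=
            lt_of_le_of_ne h2 (hne _ (heA i).1 _ hpB)
          rw [← hp3] at hlt
          exact (hspec p.2 hpB hp2).2.2 hlt
        · rw [hp1] at h1
          exact hq2.1 h1
      · left
        exact ⟨(e i : α), astar, by rintro p ⟨-, ⟨h, -⟩ | ⟨h, -⟩⟩ <;> [left; right] <;> exact h⟩
    choose L hL hrev using key
    refine ⟨L, hL, ?_⟩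
    intro aa haa bb hbb hinc
    by_cases haa' : aa = astar
    · subst haa'
      obtain ⟨hhA, hhne, -⟩ := hspec bb hbb hinc
      have hmem : home bb ∈ hA'fin.toFinset :=
        hA'fin.mem_toFinset.mpr ⟨hhA, by simp [hhne]⟩
      refine ⟨e.symm ⟨home bb, hmem⟩, hrev _ (aa, bb) ?_⟩
      refine ⟨hbb, Or.inr ⟨rfl, hinc, ?_⟩⟩
      rw [Equiv.apply_symm_apply]
    · have hmem : aa ∈ hA'fin.toFinset :=
        hA'fin.mem_toFinset.mpr ⟨haa, by simp [haa']⟩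
      refine ⟨e.symm ⟨aa, hmem⟩, hrev _ (aa, bb) ?_⟩
      refine ⟨hbb, Or.inl ⟨?_, ?_⟩⟩
      · rw [Equiv.apply_symm_apply]
      · rw [Equiv.apply_symm_apply]; exact hinc

theorem stmt_14 (α : Type*) [PartialOrder α] [Fintype α] (A B : Set α)
    (hA : ∀ a ∈ A, IsMin a) (hB : ∀ b ∈ B, IsMax b)
    (hcover : A ∪ B = Set.univ) (hdisj : Disjoint A B)
    (m : ℕ) (hm : m = min A.ncard B.ncard) (hm2 : 2 ≤ m) :
    Idim α A B < m ∨
      ∃ a b : Fin m → α, Function.Injective a ∧ Function.Injective b ∧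
        (∀ i, a i ∈ A) ∧ (∀ i, b i ∈ B) ∧
        (∀ i j : Fin m, a i < b j ↔ i ≠ j) ∧
        (∀ i : Fin m, Incomp (a i) (b i)) := by
  classical
  have hmlt : m - 1 < m := Nat.sub_lt (by omega) one_pos
  rcases le_total A.ncard B.ncard with hAB | hAB
  · have hmA : A.ncard = m := by rw [hm, min_eq_left hAB]
    rcases side_lemma A B hdisj m hmA A.toFinite hm2 with ⟨L, h1, h2⟩ | hS
    · left
      have hle : Idim α A B ≤ m - 1 := Nat.sInf_le ⟨L, h1, h2⟩
      exact lt_of_le_of_lt hle hmlt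
    · right; exact hS
  · have hmB : B.ncard = m := by rw [hm, min_eq_right hAB]
    have hdisj' : Disjoint (B : Set αᵒᵈ) (A : Set αᵒᵈ) := hdisj.symm
    rcases side_lemma (α := αᵒᵈ) B A hdisj' m hmB B.toFinite hm2 with ⟨L, h1, h2⟩ | hS
    · left
      have hmem : ∃ L' : Fin (m - 1) → (α → α → Prop), (∀ i, IsLinearExtension (L' i)) ∧
          ∀ a ∈ A, ∀ b ∈ B, Incomp a b → ∃ i, L' i b a := by
        refine ⟨fun i x y => L i y x, ?_, ?_⟩
        · intro i
          obtain ⟨hlin, hext⟩ := h1 i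
          refine ⟨?_, fun x y h => hext y x h⟩
          haveI : IsLinearOrder αᵒᵈ (L i) := hlin
          exact (inferInstance : IsLinearOrder αᵒᵈ (Function.swap (L i)))
        · intro a ha b hb hinc
          obtain ⟨i, hi⟩ := h2 b hb a ha ⟨hinc.1, hinc.2⟩
          exact ⟨i, hi⟩
      have hle : Idim α A B ≤ m - 1 := Nat.sInf_le hmem
      exact lt_of_le_of_lt hle hmlt
    · right
      obtain ⟨a', b', hainj, hbinj, haB, hbA, hlt, hinc⟩ := hS
      refine ⟨fun i => b' i, fun i => a' i, hbinj, hainj, hbA, haB, ?_, ?_⟩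
      · intro i j
        have := hlt j i
        constructor
        · intro h hij
          exact ((this.mp h) hij.symm)
        · intro h
          exact this.mpr (fun hh => h hh.symm)
      · intro i
        exact ⟨(hinc i).1, (hinc i).2⟩
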